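/- Let q, a, x, u, y ∈ ℂ with 0 < |q| < 1, |u| ≤ 1, |a y| < 1, x ≠ 0, and 1 - a q^j x ≠ 0 for all j ≥ 0, and let n ∈ ℕ. Then T(y D_q|u) applied to the function t ↦ 1/(a t;q)_n, evaluated at x, equals (1/(a x;q)_n) · ∑_{m=0}^{∞} u^{C(m,2)} (q^n;q)_m (a y)^m / ((q;q)_m (a q^n x;q)_m), and both series converge absolutely. -/

import Mathlib

/-- The finite q-shifted factorial (a;q)_n = ∏_{j=0}^{n-1} (1 - a q^j). -/
noncomputable def qPoch (q a : ℂ) (n : ℕ) : ℂ :=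
  ∏ j ∈ Finset.range n, (1 - a * q ^ j)

/-- The q-differential operator: (D_q f)(x) = (f(x) - f(qx))/x. -/
noncomputable def Dq (q : ℂ) (f : ℂ → ℂ) : ℂ → ℂ :=
  fun x => (f x - f (q * x)) / x

/-- The deformed q-exponential operator:
T(y D_q|u) f(x) = ∑_{m≥0} u^{C(m,2)} (y^m/(q;q)_m) (D_q^m f)(x). -/
noncomputable def Tq (q u y : ℂ) (f : ℂ → ℂ) (x : ℂ) : ℂ :=
  ∑' m : ℕ, u ^ (m.choose 2) * (y ^ m / qPoch q q m) * ((Dq q)^[m] f x)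

lemma qPoch_succ (q a : ℂ) (n : ℕ) :
    qPoch q a (n + 1) = qPoch q a n * (1 - a * q ^ n) := by
  simp [qPoch, Finset.prod_range_succ]

lemma qPoch_add (q a : ℂ) (n m : ℕ) :
    qPoch q a (n + m) = qPoch q a n * qPoch q (a * q ^ n) m := by
  simp only [qPoch, Finset.prod_range_add]
  congr 1
  refine Finset.prod_congr rfl fun j _ => ?_
  ring

lemma qPoch_one_add (q a : ℂ) (m : ℕ) :
    qPoch q a (1 + m) = (1 - a) * qPoch q (a * q) m := by
  rw [qPoch_add]; simp [qPoch, Finset.prod_range_succ]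

lemma qPoch_ne_zero (q a : ℂ) (n : ℕ) (h : ∀ j, 1 - a * q ^ j ≠ 0) :
    qPoch q a n ≠ 0 :=
  Finset.prod_ne_zero_iff.2 fun j _ => h j

lemma Diter (q a : ℂ) (hq : q ≠ 0) (n : ℕ) :
    ∀ (m : ℕ) (x : ℂ), x ≠ 0 → (∀ j : ℕ, 1 - a * q ^ j * x ≠ 0) →
      ((Dq q)^[m] (fun t => 1 / qPoch q (a * t) n) x)
        = a ^ m * qPoch q (q ^ n) m / qPoch q (a * x) (n + m) := by
  intro m
  induction m with
  | zero => intro x hx hax; simp [qPoch]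
  | succ m ih =>
    intro x hx hax
    have hax' : ∀ j : ℕ, 1 - a * q ^ j * (q * x) ≠ 0 := by
      intro j
      have := hax (j + 1)
      intro hc; apply this
      rw [← hc]; ring
    rw [Function.iterate_succ_apply', Dq, ih x hx hax, ih (q * x) (mul_ne_zero hq hx) hax']
    -- nonzeroness facts
    have hP : qPoch q (a * x) (n + m) ≠ 0 := by
      apply qPoch_ne_zero
      intro j
      have := hax j
      intro hc; apply this; rw [← hc]; ring
    have hP' : qPoch q (a * (q * x)) (n + m) ≠ 0 := by
      apply qPoch_ne_zero
      intro j
      have := hax (j + 1)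
      intro hc; apply this; rw [← hc]; ring
    have hQ : qPoch q (a * x) (n + m + 1) ≠ 0 := by
      apply qPoch_ne_zero
      intro j
      have := hax j
      intro hc; apply this; rw [← hc]; ring
    have h0 : (1 - a * x) ≠ 0 := by
      have := hax 0; intro hc; apply this; rw [← hc]; ring
    -- structural identities
    have e1 : qPoch q (a * x) (n + m + 1) = qPoch q (a * x) (n + m) * (1 - a * x * q ^ (n + m)) :=
      qPoch_succ _ _ _
    have e2 : qPoch q (a * x) (n + m + 1) = (1 - a * x) * qPoch q (a * (q * x)) (n + m) := by
      have := qPoch_one_add q (a * x) (n + m)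
      rw [add_comm 1 (n + m)] at this
      rw [this]
      congr 2
      ring
    -- the q-Pochhammer of q^n at m+1
    have e3 : qPoch q (q ^ n) (m + 1) = qPoch q (q ^ n) m * (1 - q ^ n * q ^ m) :=
      qPoch_succ _ _ _
    rw [e3, pow_succ]
    rw [show n + (m + 1) = n + m + 1 by ring]
    have hrel : (1 - a * x) * qPoch q (a * (q * x)) (n + m)
        = qPoch q (a * x) (n + m) * (1 - a * x * q ^ (n + m)) := by
      linear_combination e1 - e2
    rw [div_sub_div _ _ hP hP', div_div, div_eq_div_iff (mul_ne_zero (mul_ne_zero hP hP') hx) hQ]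
    rw [e2]
    linear_combination (a ^ m * qPoch q (q ^ n) m * qPoch q (a * (q * x)) (n + m)) * hrel

lemma geom_partial_le {r : ℝ} (h0 : 0 ≤ r) (h1 : r < 1) (m : ℕ) :
    ∑ j ∈ Finset.range m, r ^ j ≤ (1 - r)⁻¹ := by
  have hs : Summable fun j : ℕ => r ^ j := summable_geometric_of_lt_one h0 h1
  have := Summable.sum_le_tsum (Finset.range m) (fun j _ => pow_nonneg h0 j) hs
  rwa [tsum_geometric_of_lt_one h0 h1] at this

lemma qPoch_abs_le (q c : ℂ) (hq1 : ‖q‖ < 1) (m : ℕ) :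
    ‖qPoch q c m‖ ≤ Real.exp (‖c‖ * (1 - ‖q‖)⁻¹) := by
  rw [qPoch, norm_prod]
  calc ∏ j ∈ Finset.range m, ‖1 - c * q ^ j‖
      ≤ ∏ j ∈ Finset.range m, Real.exp (‖c‖ * ‖q‖ ^ j) := by
        apply Finset.prod_le_prod (fun j _ => norm_nonneg _)
        intro j _
        calc ‖1 - c * q ^ j‖ ≤ ‖1‖ + ‖c * q ^ j‖ :=
              norm_sub_le _ _
          _ = 1 + ‖c‖ * ‖q‖ ^ j := by simp [norm_mul, norm_pow]
          _ ≤ Real.exp (‖c‖ * ‖q‖ ^ j) := by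
              have := Real.add_one_le_exp (‖c‖ * ‖q‖ ^ j)
              linarith
    _ = Real.exp (∑ j ∈ Finset.range m, ‖c‖ * ‖q‖ ^ j) := by
        rw [Real.exp_sum]
    _ ≤ Real.exp (‖c‖ * (1 - ‖q‖)⁻¹) := by
        apply Real.exp_le_exp.2
        rw [← Finset.mul_sum]
        apply mul_le_mul_of_nonneg_left _ (norm_nonneg _)
        exact geom_partial_le (norm_nonneg _) hq1 m

lemma prod_one_sub_ge (m : ℕ) (t : ℕ → ℝ) (h0 : ∀ j, 0 ≤ t j) (h1 : ∀ j, t j ≤ 1) :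
    1 - ∑ j ∈ Finset.range m, t j ≤ ∏ j ∈ Finset.range m, (1 - t j) ∧
    0 ≤ ∏ j ∈ Finset.range m, (1 - t j) := by
  induction m with
  | zero => simp
  | succ m ih =>
    obtain ⟨ih1, ih2⟩ := ih
    rw [Finset.prod_range_succ, Finset.sum_range_succ]
    constructor
    · rcases le_or_gt (1 - ∑ j ∈ Finset.range m, t j) 0 with hc | hc
      · nlinarith [h0 m, h1 m]
      · nlinarith [h0 m, h1 m, Finset.sum_nonneg (fun j (_ : j ∈ Finset.range m) => h0 j)]
    · nlinarith [h1 m]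

lemma qPoch_abs_lb (q c : ℂ) (hq1 : ‖q‖ < 1)
    (h : ∀ j : ℕ, 1 - c * q ^ j ≠ 0) :
    ∃ ε : ℝ, 0 < ε ∧ ∀ m, ε ≤ ‖qPoch q c m‖ := by
  set r := ‖q‖ with hr
  have hr0 : 0 ≤ r := norm_nonneg _
  -- choose J with |c| * r^J ≤ (1-r)/2
  have h2 : (0:ℝ) < (1 - r) / (2 * (‖c‖ + 1)) := by
    have : 0 < ‖c‖ + 1 := by positivity
    have : 0 < 1 - r := by linarith
    positivity
  obtain ⟨J, hJ⟩ := exists_pow_lt_of_lt_one h2 hq1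
  have hcJ : ‖c‖ * r ^ J * (1 - r)⁻¹ ≤ 1 / 2 := by
    have hc1 : (0:ℝ) < ‖c‖ + 1 := by positivity
    have h1r : (0:ℝ) < 1 - r := by linarith
    have hle : ‖c‖ * r ^ J ≤ (1 - r) / 2 := by
      have := hJ.le
      have hb : ‖c‖ * r ^ J ≤ (‖c‖ + 1) * ((1 - r) / (2 * (‖c‖ + 1))) := by
        have : ‖c‖ * r ^ J ≤ (‖c‖ + 1) * r ^ J := by
          nlinarith [pow_nonneg hr0 J]
        refine this.trans ?_
        apply mul_le_mul_of_nonneg_left hJ.le (by positivity)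
      calc ‖c‖ * r ^ J ≤ (‖c‖ + 1) * ((1 - r) / (2 * (‖c‖ + 1))) := hb
        _ = (1 - r) / 2 := by field_simp
    calc ‖c‖ * r ^ J * (1 - r)⁻¹ ≤ ((1 - r) / 2) * (1 - r)⁻¹ := by
          apply mul_le_mul_of_nonneg_right hle (by positivity)
      _ = 1 / 2 := by field_simp
  -- tail bound: for all k, 1/2 ≤ |qPoch q (c * q^J) k|
  have tail : ∀ k, (1:ℝ)/2 ≤ ‖qPoch q (c * q ^ J) k‖ := by
    intro k
    rw [qPoch, norm_prod]
    set t : ℕ → ℝ := fun j => ‖c‖ * r ^ (J + j) with ht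
    have ht0 : ∀ j, 0 ≤ t j := fun j => by positivity
    have htle : ∀ j, t j ≤ 1 / 2 := by
      intro j
      have h1r : (0:ℝ) < 1 - r := by linarith
      have : t j ≤ ‖c‖ * r ^ J := by
        rw [ht]
        simp only []
        rw [pow_add]
        nlinarith [pow_nonneg hr0 j, pow_le_one₀ hr0 hq1.le (n := j),
          mul_nonneg (norm_nonneg c) (pow_nonneg hr0 J)]
      refine this.trans ?_
      have h1 : (1:ℝ) ≤ (1 - r)⁻¹ := by
        rw [le_inv_comm₀] <;> nlinarith
      nlinarith [norm_nonneg c, pow_nonneg hr0 J]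
    have ht1 : ∀ j, t j ≤ 1 := fun j => (htle j).trans (by norm_num)
    have hsum : ∑ j ∈ Finset.range k, t j ≤ 1 / 2 := by
      calc ∑ j ∈ Finset.range k, t j = ‖c‖ * r ^ J * ∑ j ∈ Finset.range k, r ^ j := by
            rw [Finset.mul_sum]
            exact Finset.sum_congr rfl fun j _ => by rw [ht]; simp only []; rw [pow_add]; ring
        _ ≤ ‖c‖ * r ^ J * (1 - r)⁻¹ := by
            apply mul_le_mul_of_nonneg_left (geom_partial_le hr0 hq1 k) (by positivity)
        _ ≤ 1 / 2 := hcJ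
    have key : ∏ j ∈ Finset.range k, (1 - t j) ≤
        ∏ j ∈ Finset.range k, ‖1 - c * q ^ J * q ^ j‖ := by
      apply Finset.prod_le_prod
      · intro j _
        have := htle j; linarith
      · intro j _
        calc 1 - t j = 1 - ‖c * q ^ J * q ^ j‖ := by
              rw [ht]; simp [map_mul, map_pow, pow_add]; ring_nf; rw [hr]
          _ ≤ ‖1 - c * q ^ J * q ^ j‖ := by
              have := norm_sub_norm_le (1 : ℂ) (c * q ^ J * q ^ j)
              simpa using this
    have lb := (prod_one_sub_ge k t ht0 ht1).1
    have : 1 - ∑ j ∈ Finset.range k, t j ≥ 1/2 := by linarith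
    linarith [lb.trans key]
  -- combine with the finite minimum over m ≤ J
  have hne : (Finset.range (J + 1)).Nonempty := ⟨0, by simp⟩
  set ε0 := (Finset.range (J + 1)).inf' hne (fun m => ‖qPoch q c m‖) with hε0
  have hε0pos : 0 < ε0 := by
    rw [hε0, Finset.lt_inf'_iff]
    intro m _
    have : qPoch q c m ≠ 0 := Finset.prod_ne_zero_iff.2 fun j _ => h j
    exact norm_pos_iff.2 this
  refine ⟨ε0 * (1/2), by positivity, ?_⟩
  intro m
  rcases le_or_gt m J with hm | hm
  · have h1 : ε0 ≤ ‖qPoch q c m‖ :=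
      Finset.inf'_le _ (Finset.mem_range.2 (by omega))
    nlinarith
  · obtain ⟨k, rfl⟩ : ∃ k, m = J + k := ⟨m - J, by omega⟩
    rw [qPoch_add, norm_mul]
    have h1 : ε0 ≤ ‖qPoch q c J‖ :=
      Finset.inf'_le _ (Finset.mem_range.2 (by omega))
    have h2 := tail k
    nlinarith [norm_nonneg (qPoch q c J)]


theorem stmt8 (q a x u y : ℂ) (hq0 : 0 < ‖q‖) (hq1 : ‖q‖ < 1)
    (hu : ‖u‖ ≤ 1) (hay : ‖a * y‖ < 1) (hx : x ≠ 0)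
    (h : ∀ j : ℕ, 1 - a * q ^ j * x ≠ 0) (n : ℕ) :
    (Summable fun m : ℕ =>
        u ^ (m.choose 2) * (y ^ m / qPoch q q m) *
          ((Dq q)^[m] (fun t => 1 / qPoch q (a * t) n) x)) ∧
    (Summable fun m : ℕ =>
        u ^ (m.choose 2) * qPoch q (q ^ n) m * (a * y) ^ m /
          (qPoch q q m * qPoch q (a * q ^ n * x) m)) ∧
    Tq q u y (fun t => 1 / qPoch q (a * t) n) x =
      1 / qPoch q (a * x) n *
        ∑' m : ℕ,
          u ^ (m.choose 2) * qPoch q (q ^ n) m * (a * y) ^ m /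
            (qPoch q q m * qPoch q (a * q ^ n * x) m) := by
  have hq : q ≠ 0 := by
    intro hc; rw [hc] at hq0; simp at hq0
  -- nonvanishing of the various q-Pochhammer factors
  have hqq : ∀ j : ℕ, 1 - q * q ^ j ≠ 0 := by
    intro j hc
    have h1 : q * q ^ j = 1 := by linear_combination -hc
    have : ‖q * q ^ j‖ < 1 := by
      rw [norm_mul, norm_pow]
      calc ‖q‖ * ‖q‖ ^ j ≤ ‖q‖ * 1 := by
            nlinarith [pow_le_one₀ (norm_nonneg q) hq1.le (n := j),
              norm_nonneg q]
        _ < 1 := by linarith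
    rw [h1] at this; simp at this
  have hQm : ∀ m, qPoch q q m ≠ 0 := fun m =>
    Finset.prod_ne_zero_iff.2 fun j _ => hqq j
  have haxf : ∀ j : ℕ, 1 - (a * x) * q ^ j ≠ 0 := by
    intro j hc; exact h j (by linear_combination hc)
  have hax : ∀ N, qPoch q (a * x) N ≠ 0 := fun N =>
    Finset.prod_ne_zero_iff.2 fun j _ => haxf j
  have hc2f : ∀ j : ℕ, 1 - (a * q ^ n * x) * q ^ j ≠ 0 := by
    intro j hc; exact h (n + j) (by rw [pow_add]; linear_combination hc)
  have hc2 : ∀ m, qPoch q (a * q ^ n * x) m ≠ 0 := fun m =>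
    Finset.prod_ne_zero_iff.2 fun j _ => hc2f j
  -- termwise identity
  have key : ∀ m : ℕ, u ^ (m.choose 2) * (y ^ m / qPoch q q m) *
          ((Dq q)^[m] (fun t => 1 / qPoch q (a * t) n) x)
      = (1 / qPoch q (a * x) n) *
          (u ^ (m.choose 2) * qPoch q (q ^ n) m * (a * y) ^ m /
            (qPoch q q m * qPoch q (a * q ^ n * x) m)) := by
    intro m
    rw [Diter q a hq n m x hx h]
    have split : qPoch q (a * x) (n + m)
        = qPoch q (a * x) n * qPoch q (a * q ^ n * x) m := by
      rw [qPoch_add]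
      congr 2
      ring
    rw [split, mul_pow]
    field_simp
  -- second summability
  have hsum2 : Summable fun m : ℕ =>
      u ^ (m.choose 2) * qPoch q (q ^ n) m * (a * y) ^ m /
        (qPoch q q m * qPoch q (a * q ^ n * x) m) := by
    obtain ⟨ε1, hε1, hb1⟩ := qPoch_abs_lb q q hq1 hqq
    obtain ⟨ε2, hε2, hb2⟩ := qPoch_abs_lb q (a * q ^ n * x) hq1 hc2f
    set C := Real.exp (‖q ^ n‖ * (1 - ‖q‖)⁻¹) with hC
    have hCpos : 0 < C := Real.exp_pos _
    apply Summable.of_norm_bounded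
      (g := fun m : ℕ => (C / (ε1 * ε2)) * ‖a * y‖ ^ m)
    · exact (summable_geometric_of_lt_one (norm_nonneg _) hay).mul_left _
    · intro m
      rw [norm_div, norm_mul, norm_mul, norm_mul, norm_pow, norm_pow]
      have hnum : ‖u‖ ^ m.choose 2 * ‖qPoch q (q ^ n) m‖ *
          ‖a * y‖ ^ m ≤ C * ‖a * y‖ ^ m := by
        have h1 : ‖u‖ ^ m.choose 2 ≤ 1 :=
          pow_le_one₀ (norm_nonneg _) hu
        have h2 : ‖qPoch q (q ^ n) m‖ ≤ C := qPoch_abs_le q (q ^ n) hq1 m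
        have h3 : (0:ℝ) ≤ ‖a * y‖ ^ m := pow_nonneg (norm_nonneg _) m
        have h5 : ‖u‖ ^ m.choose 2 * ‖qPoch q (q ^ n) m‖ ≤ 1 * C :=
          mul_le_mul h1 h2 (norm_nonneg _) zero_le_one
        calc ‖u‖ ^ m.choose 2 * ‖qPoch q (q ^ n) m‖ *
              ‖a * y‖ ^ m ≤ 1 * C * ‖a * y‖ ^ m :=
              mul_le_mul_of_nonneg_right h5 h3
          _ = C * ‖a * y‖ ^ m := by ring
      have hden : ε1 * ε2 ≤ ‖qPoch q q m‖ * ‖qPoch q (a * q ^ n * x) m‖ := by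
        have := hb1 m; have := hb2 m
        nlinarith
      calc ‖u‖ ^ m.choose 2 * ‖qPoch q (q ^ n) m‖ *
            ‖a * y‖ ^ m /
            (‖qPoch q q m‖ * ‖qPoch q (a * q ^ n * x) m‖)
          ≤ (C * ‖a * y‖ ^ m) / (ε1 * ε2) := by
            apply div_le_div₀ (by positivity) hnum (by positivity) hden
        _ = (C / (ε1 * ε2)) * ‖a * y‖ ^ m := by ring
  have hsum1 : Summable fun m : ℕ =>
      u ^ (m.choose 2) * (y ^ m / qPoch q q m) *
        ((Dq q)^[m] (fun t => 1 / qPoch q (a * t) n) x) :=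
    (hsum2.mul_left (1 / qPoch q (a * x) n)).congr fun m => (key m).symm
  refine ⟨hsum1, hsum2, ?_⟩
  rw [Tq, tsum_congr key, tsum_mul_left]
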